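/- If L ⊆ binom(X,2) is an edge-weight lasso for an X-tree T = (V,E), then |L| ≥ |E|; and if, moreover, L is a minimal edge-weight lasso for T (i.e. no proper subset of L is an edge-weight lasso for T), then |L| = |E|. -/

import Mathlib

/- Common definitions for formalizing results of Dress, Huber & Steel,
   "Lassoing a phylogenetic tree I: Basic properties, shellings, and covers".

   Trees are modelled as simple graphs on an ambient vertex type `U`;
   the vertex set of the tree is the support of the graph (every vertex of a
   tree with at least two vertices has degree >= 1). -/

noncomputable section
open scoped Classical

namespace Lasso

variable {U : Type}

/-- The degree of a vertex. -/
def deg (G : SimpleGraph U) (v : U) : ℕ := (G.neighborSet v).ncard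

/-- A leaf is a vertex of degree `1`. -/
def IsLeaf (G : SimpleGraph U) (v : U) : Prop := deg G v = 1

/-- An interior vertex: a non-leaf vertex of the tree. -/
def Interior (G : SimpleGraph U) (v : U) : Prop := v ∈ G.support ∧ ¬ IsLeaf G v

/-- `G` is an `X`-tree: a finite tree without vertices of degree two whose
    leaf set is exactly `X`. -/
structure IsXTree (X : Set U) (G : SimpleGraph U) : Prop where
  support_finite : G.support.Finite
  support_nonempty : G.support.Nonempty
  connected : ∀ a ∈ G.support, ∀ b ∈ G.support, G.Reachable a b
  acyclic : G.IsAcyclic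
  no_deg_two : ∀ v : U, deg G v ≠ 2
  leaves_eq : X = {v : U | IsLeaf G v}

/-- An edge weighting of `G`: nonnegative, and zero away from the edges of `G`
    (so that it represents an element of `ℝ_{≥0}^E`). -/
structure IsWeighting (G : SimpleGraph U) (ω : Sym2 U → ℝ) : Prop where
  nonneg : ∀ e, 0 ≤ ω e
  zero_off : ∀ e, e ∉ G.edgeSet → ω e = 0

/-- A proper edge weighting: in addition strictly positive on interior edges
    (edges both of whose endpoints are non-leaves). -/
structure IsProperWeighting (G : SimpleGraph U) (ω : Sym2 U → ℝ)
    extends IsWeighting G ω : Prop where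
  interior_pos : ∀ e ∈ G.edgeSet, (∀ u ∈ e, ¬ IsLeaf G u) → 0 < ω e

/-- The set `E_T(x|y)` of edges separating `x` from `y`, i.e. the edges lying
    on every walk from `x` to `y` (in a tree: the edges of the path). -/
def pathEdges (G : SimpleGraph U) (x y : U) : Set (Sym2 U) :=
  {e | e ∈ G.edgeSet ∧ ∀ p : G.Walk x y, e ∈ p.edges}

/-- The induced distance `D_ω(x,y)`. -/
def tdist (G : SimpleGraph U) (ω : Sym2 U → ℝ) (x y : U) : ℝ :=
  ∑ᶠ e ∈ pathEdges G x y, ω e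

/-- Path edge set of an unordered pair. -/
def pairPathEdges (G : SimpleGraph U) (c : Sym2 U) : Set (Sym2 U) :=
  {e | e ∈ G.edgeSet ∧ ∀ x y : U, c = s(x, y) → ∀ p : G.Walk x y, e ∈ p.edges}

/-- `D_ω` on an unordered pair (a cord); `λ^T_c(ω)`. -/
def pdist (G : SimpleGraph U) (ω : Sym2 U → ℝ) (c : Sym2 U) : ℝ :=
  ∑ᶠ e ∈ pairPathEdges G c, ω e

/-- `(G,ω)` and `(G',ω')` are `L`-isometric. -/
def LIso (L : Set (Sym2 U)) (G : SimpleGraph U) (ω : Sym2 U → ℝ)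
    (G' : SimpleGraph U) (ω' : Sym2 U → ℝ) : Prop :=
  ∀ x y : U, s(x, y) ∈ L → tdist G ω x y = tdist G' ω' x y

/-- `L` is a set of cords of `X`: 2-element subsets of `X`. -/
def IsCordSet (X : Set U) (L : Set (Sym2 U)) : Prop :=
  ∀ c ∈ L, ¬ c.IsDiag ∧ ∀ u ∈ c, u ∈ X

/-- The union of all cords in `L`. -/
def cup (L : Set (Sym2 U)) : Set U := {v | ∃ c ∈ L, v ∈ c}

/-- `L` is an edge-weight lasso for `G`. -/
def EdgeWeightLasso (G : SimpleGraph U) (L : Set (Sym2 U)) : Prop :=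
  ∀ ω ω' : Sym2 U → ℝ, IsProperWeighting G ω → IsProperWeighting G ω' →
    LIso L G ω G ω' → ω = ω'

/-- `G ≃ G'` via a graph isomorphism fixing `X` pointwise. -/
def FixingIso (X : Set U) (G G' : SimpleGraph U) : Prop :=
  ∃ φ : G ≃g G', ∀ x ∈ X, φ x = x

/-- `(G,ω)` and `(G',ω')` are isometric: a graph isomorphism fixing `X`
    pointwise and preserving edge weights. -/
def FixingIsometry (X : Set U) (G G' : SimpleGraph U) (ω ω' : Sym2 U → ℝ) : Prop :=
  ∃ φ : G ≃g G', (∀ x ∈ X, φ x = x) ∧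
    ∀ e ∈ G.edgeSet, ω' (Sym2.map (fun u => φ u) e) = ω e

/-- `L` is a topological lasso for the `X`-tree `G`. -/
def TopologicalLasso (X : Set U) (G : SimpleGraph U) (L : Set (Sym2 U)) : Prop :=
  ∀ G' : SimpleGraph U, IsXTree X G' →
    ∀ ω ω' : Sym2 U → ℝ, IsProperWeighting G ω → IsProperWeighting G' ω' →
      LIso L G ω G' ω' → FixingIso X G G'

/-- `L` is a strong lasso for the `X`-tree `G`. -/
def StrongLasso (X : Set U) (G : SimpleGraph U) (L : Set (Sym2 U)) : Prop :=
  ∀ G' : SimpleGraph U, IsXTree X G' →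
    ∀ ω ω' : Sym2 U → ℝ, IsProperWeighting G ω → IsProperWeighting G' ω' →
      LIso L G ω G' ω' → FixingIsometry X G G' ω ω'

/-- `G` displays the quartet `a a' ‖ b b'`: some edge lies on all four paths
    joining `a` or `a'` to `b` or `b'`. -/
def DisplaysQ (G : SimpleGraph U) (a a' b b' : U) : Prop :=
  ∃ e : Sym2 U, e ∈ pathEdges G a b ∧ e ∈ pathEdges G a b' ∧
    e ∈ pathEdges G a' b ∧ e ∈ pathEdges G a' b'

def Distinct4 (a b c d : U) : Prop :=
  a ≠ b ∧ a ≠ c ∧ a ≠ d ∧ b ≠ c ∧ b ≠ d ∧ c ≠ d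

/-- `a a' ‖ b b' ∈ Q(G)`: a quartet on four distinct elements of `X`
    displayed by `G`. -/
def QuartetOf (X : Set U) (G : SimpleGraph U) (a a' b b' : U) : Prop :=
  a ∈ X ∧ a' ∈ X ∧ b ∈ X ∧ b' ∈ X ∧ Distinct4 a a' b b' ∧ DisplaysQ G a a' b b'

/-- `G` displays `a a' | b b'`: it displays neither `a b ‖ a' b'` nor
    `a b' ‖ a' b`. -/
def DisplaysBar (G : SimpleGraph U) (a a' b b' : U) : Prop :=
  ¬ DisplaysQ G a b a' b' ∧ ¬ DisplaysQ G a b' a' b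

/-- `A, B` is a virtual `T`-split of `X`. -/
def VirtualSplit (X : Set U) (G : SimpleGraph U) (A B : Set U) : Prop :=
  A.Nonempty ∧ B.Nonempty ∧ Disjoint A B ∧ A ∪ B = X ∧
    ∀ a ∈ A, ∀ a' ∈ A, ∀ b ∈ B, ∀ b' ∈ B, a ≠ a' → b ≠ b' → DisplaysBar G a a' b b'

/-- `G ≤ G'` (`G'` refines `G`), via the standard characterization
    `Q(T) ⊆ Q(T')` of refinement of `X`-trees. -/
def Refines (X : Set U) (G G' : SimpleGraph U) : Prop :=
  ∀ a a' b b' : U, QuartetOf X G a a' b b' → QuartetOf X G' a a' b b'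

/-- `L` is a weak lasso for (coralls) the `X`-tree `G`. -/
def WeakLasso (X : Set U) (G : SimpleGraph U) (L : Set (Sym2 U)) : Prop :=
  ∀ G' : SimpleGraph U, IsXTree X G' →
    ∀ ω ω' : Sym2 U → ℝ, IsProperWeighting G ω → IsProperWeighting G' ω' →
      LIso L G ω G' ω' → Refines X G G'

/-- The subgraph induced on a vertex set `A`. -/
def restrict {α : Type*} (Γ : SimpleGraph α) (A : Set α) : SimpleGraph α where
  Adj u v := Γ.Adj u v ∧ u ∈ A ∧ v ∈ A
  symm := ⟨by rintro u v ⟨h, hu, hv⟩; exact ⟨h.symm, hv, hu⟩⟩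
  loopless := ⟨by rintro v ⟨h, _, _⟩; exact Γ.ne_of_adj h rfl⟩

/-- The restriction of `Γ` to `A` is a connected graph. -/
def ConnectedOn {α : Type*} (Γ : SimpleGraph α) (A : Set α) : Prop :=
  ∀ x ∈ A, ∀ y ∈ A, (restrict Γ A).Reachable x y

/-- The connected component of `x` in `Γ` is bipartite. -/
def ComponentBipartite {α : Type*} (Γ : SimpleGraph α) (x : α) : Prop :=
  ∃ f : α → Bool, ∀ u v : α, Γ.Reachable x u → Γ.Adj u v → f u ≠ f v

/-- No connected component (of the graph with vertex set `S`) is bipartite. -/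
def StronglyNonBipartite {α : Type*} (Γ : SimpleGraph α) (S : Set α) : Prop :=
  ∀ x ∈ S, ¬ ComponentBipartite Γ x

/-- The graph `Γ` is bipartite. -/
def Bipartite {α : Type*} (Γ : SimpleGraph α) : Prop :=
  ∃ f : α → Bool, ∀ u v : α, Γ.Adj u v → f u ≠ f v

/-- `E_v`: the set of edges of `G` containing `v`. -/
def Ev (G : SimpleGraph U) (v : U) : Set (Sym2 U) := {e | e ∈ G.edgeSet ∧ v ∈ e}

/-- The graph `G(L,v)` on the edge set `E_v`: two distinct edges at `v` are
    adjacent if some cord of `L` has both on its path. -/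
def covGraph (G : SimpleGraph U) (L : Set (Sym2 U)) (v : U) : SimpleGraph (Sym2 U) where
  Adj e e' := e ≠ e' ∧ e ∈ Ev G v ∧ e' ∈ Ev G v ∧
    ∃ x y : U, s(x, y) ∈ L ∧ e ∈ pathEdges G x y ∧ e' ∈ pathEdges G x y
  symm := ⟨by
    rintro e e' ⟨hne, he, he', x, y, hc, hp, hp'⟩
    exact ⟨hne.symm, he', he, x, y, hc, hp', hp⟩⟩
  loopless := ⟨by rintro e ⟨hne, _⟩; exact hne rfl⟩

/-- `G(L,v)` is the complete graph on `E_v`. -/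
def CompleteAt (G : SimpleGraph U) (L : Set (Sym2 U)) (v : U) : Prop :=
  ∀ e ∈ Ev G v, ∀ e' ∈ Ev G v, e ≠ e' → (covGraph G L v).Adj e e'

/-- `L` is a `t`-cover of `G`. -/
def TCover (X : Set U) (G : SimpleGraph U) (L : Set (Sym2 U)) : Prop :=
  cup L = X ∧ ∀ v : U, Interior G v → CompleteAt G L v

/-- The graph `Γ(L, c)` for the cord `c = x x'`, with vertex set `X − {x,x'}`
    and edge set `L^(c)`. -/
def cordGraphC (X : Set U) (G : SimpleGraph U) (L : Set (Sym2 U)) (x x' : U) :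
    SimpleGraph U where
  Adj y y' := y ≠ y' ∧ y ≠ x ∧ y ≠ x' ∧ y' ≠ x ∧ y' ≠ x' ∧
    s(y, y') ∈ L ∧ QuartetOf X G x x' y y' ∧
    ((s(x, y) ∈ L ∧ s(x', y') ∈ L) ∨ (s(x, y') ∈ L ∧ s(x', y) ∈ L))
  symm := ⟨by
    rintro y y' ⟨hne, h1, h2, h3, h4, hL,
      ⟨hx1, hx2, hy1, hy2, ⟨d1, d2, d3, d4, d5, d6⟩, e, p1, p2, p3, p4⟩, hor⟩
    exact ⟨hne.symm, h3, h4, h1, h2, by rwa [Sym2.eq_swap],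
      ⟨hx1, hx2, hy2, hy1, ⟨d1, d3, d2, d5, d4, d6.symm⟩, e, p2, p1, p4, p3⟩, hor.symm⟩⟩
  loopless := ⟨by rintro y ⟨hne, _⟩; exact hne rfl⟩

/-- `v` lies on the path of `G` from `x` to `y`. -/
def OnPath (G : SimpleGraph U) (x y v : U) : Prop :=
  v = x ∨ v = y ∨ ∃ e ∈ pathEdges G x y, v ∈ e

/-- `v = med_G(a,b,c)`: `v` lies on all three pairwise paths. -/
def IsMedian (G : SimpleGraph U) (a b c v : U) : Prop :=
  OnPath G a b v ∧ OnPath G a c v ∧ OnPath G b c v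

/-- `L` is a triplet cover of `G`. -/
def TripletCover (X : Set U) (G : SimpleGraph U) (L : Set (Sym2 U)) : Prop :=
  ∀ v : U, Interior G v → ∃ a b c : U, a ∈ X ∧ b ∈ X ∧ c ∈ X ∧
    a ≠ b ∧ a ≠ c ∧ b ≠ c ∧
    s(a, b) ∈ L ∧ s(a, c) ∈ L ∧ s(b, c) ∈ L ∧ IsMedian G a b c v

/-- `L` is a pointed `x`-cover of `G`. -/
def PointedCover (X : Set U) (G : SimpleGraph U) (L : Set (Sym2 U)) (x : U) : Prop :=
  cup L = X ∧ (∀ v : U, Interior G v → CompleteAt G L v) ∧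
    ∀ v : U, Interior G v → ∃ a b : U, a ≠ b ∧
      s(a, x) ∈ L ∧ s(b, x) ∈ L ∧ IsMedian G a b x v

/-- Every interior vertex has degree `3`. -/
def IsBinary (G : SimpleGraph U) : Prop := ∀ v : U, Interior G v → deg G v = 3

/-- `a, b` form a `T`-cherry with common neighbour `v`. -/
def IsCherry (G : SimpleGraph U) (a b v : U) : Prop :=
  a ≠ b ∧ IsLeaf G a ∧ IsLeaf G b ∧ G.Adj a v ∧ G.Adj b v

/-- `a, b` form a proper `T`-cherry with common neighbour `v` of degree `3`. -/
def IsProperCherry (G : SimpleGraph U) (a b v : U) : Prop :=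
  IsCherry G a b v ∧ deg G v = 3

/-- `W` is a `T`-core of `G`. -/
def IsCore (G : SimpleGraph U) (W : Set U) : Prop :=
  W.Nonempty ∧ W ⊆ G.support ∧
    (∀ a ∈ W, ∀ b ∈ W, (restrict G W).Reachable a b) ∧
    ∀ v ∈ W, deg (restrict G W) v = 1 ∨ deg (restrict G W) v = deg G v

/-- `X_W`: the leaf set of the induced tree `T_W`. -/
def coreLeaves (G : SimpleGraph U) (W : Set U) : Set U :=
  {v | v ∈ W ∧ deg (restrict G W) v = 1}

/-- `g` is the gate of `x` in `W`: the vertex of `W` closest to `x`. -/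
def IsGate (G : SimpleGraph U) (W : Set U) (x g : U) : Prop :=
  g ∈ W ∧ ∀ w ∈ W, OnPath G x w g

/-- `L_W`: the cords induced on the gates. -/
def gateCords (G : SimpleGraph U) (W : Set U) (L : Set (Sym2 U)) : Set (Sym2 U) :=
  {c | ∃ p q y y' : U, s(p, q) ∈ L ∧ IsGate G W p y ∧ IsGate G W q y' ∧
       y ≠ y' ∧ c = s(y, y')}

/-- The gate map of the cherry reduction: `a, b ↦ v`, all else fixed. -/
def cherryMap (a b v : U) : U → U := fun p => if p = a ∨ p = b then v else p

/-- `L_U` for the cherry reduction at the proper cherry `a,b` with neighbour `v`. -/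
def cherryLU (L : Set (Sym2 U)) (a b v : U) : Set (Sym2 U) :=
  {c | ∃ p q : U, s(p, q) ∈ L ∧ cherryMap a b v p ≠ cherryMap a b v q ∧
       c = s(cherryMap a b v p, cherryMap a b v q)}

/-- `X(a, L^{ab}) = {y : ay ∈ L − {ab}}`. -/
def sideSet (L : Set (Sym2 U)) (a b : U) : Set U :=
  {y | s(a, y) ∈ L ∧ s(a, y) ≠ s(a, b)}

/-- `Σ_{c ∈ LU} ρ(c)·λ^{TU}_c = 0` as a linear form on `ℝ^{E_U}`. -/
def RhoAnnihilates (TU : SimpleGraph U) (LU : Set (Sym2 U)) (ρ : Sym2 U → ℝ) : Prop :=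
  ∀ η : Sym2 U → ℝ, (∀ e, e ∉ TU.edgeSet → η e = 0) →
    ∑ᶠ c ∈ LU, ρ c * pdist TU η c = 0

/-- `D_ω(ab|cd)`. -/
def Dq (G : SimpleGraph U) (ω : Sym2 U → ℝ) (a b c d : U) : ℝ :=
  max (tdist G ω a c + tdist G ω b d) (tdist G ω a d + tdist G ω b c)
    - tdist G ω a b - tdist G ω c d

/-- The star tree on `X` with central vertex `z`. -/
def starGraph (X : Set U) (z : U) : SimpleGraph U :=
  SimpleGraph.fromEdgeSet {c | ∃ x ∈ X, c = s(x, z)}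

/-- `A ∨ B`: all cords with one end in `A` and the other in `B`. -/
def vee (A B : Set U) : Set (Sym2 U) := {c | ∃ a ∈ A, ∃ b ∈ B, c = s(a, b)}

/-- A `T`-shelling of `binom(X,2) − L` with cords `aᵢbᵢ` and pivots `pᵢ, qᵢ`. -/
def IsShelling (X : Set U) (G : SimpleGraph U) (L : Set (Sym2 U)) (m : ℕ)
    (a b p q : Fin m → U) : Prop :=
  (∀ i, a i ∈ X ∧ b i ∈ X ∧ a i ≠ b i ∧ s(a i, b i) ∉ L) ∧
  Function.Injective (fun i => s(a i, b i)) ∧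
  (∀ x y : U, x ∈ X → y ∈ X → x ≠ y → s(x, y) ∉ L → ∃ i, s(x, y) = s(a i, b i)) ∧
  ∀ i : Fin m,
    p i ∈ X ∧ q i ∈ X ∧ p i ≠ q i ∧
    p i ≠ a i ∧ p i ≠ b i ∧ q i ≠ a i ∧ q i ≠ b i ∧
    DisplaysQ G (a i) (p i) (b i) (q i) ∧
    ∀ u w : U, u ∈ ({a i, b i, p i, q i} : Set U) → w ∈ ({a i, b i, p i, q i} : Set U) →
      u ≠ w → s(u, w) ≠ s(a i, b i) →
      (s(u, w) ∈ L ∨ ∃ j : Fin m, j < i ∧ s(u, w) = s(a j, b j))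

/-- `L` is an `s`-lasso for `G`. -/
def SLasso (X : Set U) (G : SimpleGraph U) (L : Set (Sym2 U)) : Prop :=
  cup L = X ∧ ∃ (m : ℕ) (a b p q : Fin m → U), IsShelling X G L m a b p q

/-- `L'_{A,B}` of Corollary 3 (the cherry construction). -/
def LAB (L' : Set (Sym2 U)) (X : Set U) (a b : U) (A B : Set U) : Set (Sym2 U) :=
  {c | c ∈ L' ∧ ∀ u ∈ c, u ∈ X ∧ u ≠ a ∧ u ≠ b} ∪
  {c | ∃ x ∈ A ∪ {b}, c = s(a, x)} ∪
  {c | ∃ x ∈ B, c = s(b, x)}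

end Lasso
namespace Lasso

variable {U : Type}

lemma pathEdges_symm (G : SimpleGraph U) (x y : U) :
    pathEdges G x y = pathEdges G y x := by
  ext e
  constructor <;> rintro ⟨he, hp⟩ <;> refine ⟨he, fun p => ?_⟩ <;>
  · have := hp p.reverse
    simpa [SimpleGraph.Walk.edges_reverse] using this

lemma pairPathEdges_eq (G : SimpleGraph U) (x y : U) :
    pairPathEdges G s(x, y) = pathEdges G x y := by
  ext e
  constructor
  · rintro ⟨he, hp⟩; exact ⟨he, hp x y rfl⟩
  · rintro ⟨he, hp⟩
    refine ⟨he, fun x' y' hxy p => ?_⟩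
    rw [Sym2.eq_iff] at hxy
    rcases hxy with ⟨h1, h2⟩ | ⟨h1, h2⟩
    · subst h1; subst h2; exact hp p
    · subst h1; subst h2
      have : e ∈ pathEdges G y x := (pathEdges_symm G x y) ▸ (⟨he, hp⟩ : e ∈ pathEdges G x y)
      exact this.2 p

lemma pdist_eq_tdist (G : SimpleGraph U) (ω : Sym2 U → ℝ) (x y : U) :
    pdist G ω s(x, y) = tdist G ω x y := by
  rw [pdist, tdist, pairPathEdges_eq]

lemma pairPathEdges_subset (G : SimpleGraph U) (c : Sym2 U) :
    pairPathEdges G c ⊆ G.edgeSet := fun _ h => h.1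

lemma pdist_eq_sum (G : SimpleGraph U) (ω : Sym2 U → ℝ) (c : Sym2 U)
    (h : (pairPathEdges G c).Finite) :
    pdist G ω c = ∑ e ∈ h.toFinset, ω e := by
  refine finsum_mem_eq_sum_of_subset _ (fun e he => ?_) (by simp)
  simpa using he.1

theorem key (G : SimpleGraph U) (hE : G.edgeSet.Finite)
    (L : Set (Sym2 U)) (hLfin : L.Finite) (hlasso : EdgeWeightLasso G L) :
    G.edgeSet.ncard ≤ L.ncard ∧
      ∃ L₀ : Set (Sym2 U), L₀ ⊆ L ∧ EdgeWeightLasso G L₀ ∧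
        L₀.ncard ≤ G.edgeSet.ncard := by
  haveI : Fintype ↥G.edgeSet := hE.fintype
  haveI : Fintype ↥L := hLfin.fintype
  have hppf : ∀ c, (pairPathEdges G c).Finite :=
    fun c => hE.subset (pairPathEdges_subset G c)
  -- the extension map
  let ext : (↥G.edgeSet → ℝ) →ₗ[ℝ] (Sym2 U → ℝ) :=
    { toFun := fun v e => if h : e ∈ G.edgeSet then v ⟨e, h⟩ else 0
      map_add' := by
        intro a b; funext e; by_cases h : e ∈ G.edgeSet <;> simp [h]
      map_smul' := by
        intro r a; funext e; by_cases h : e ∈ G.edgeSet <;> simp [h] }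
  have hext_supp : ∀ (v) (e), e ∉ G.edgeSet → ext v e = 0 := fun v e h => dif_neg h
  have hext_app : ∀ (v) (e) (h : e ∈ G.edgeSet), ext v e = v ⟨e, h⟩ :=
    fun v e h => dif_pos h
  have hext_inj : ∀ v, ext v = 0 → v = 0 := by
    intro v hv
    funext e
    have := congrFun hv e.1
    rwa [hext_app v e.1 e.2, Subtype.coe_eta] at this
  have hres : ∀ η : Sym2 U → ℝ, (∀ e, e ∉ G.edgeSet → η e = 0) →
      ext (fun e => η e.1) = η := by
    intro η hη; funext e
    by_cases h : e ∈ G.edgeSet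
    · rw [hext_app _ e h]
    · rw [hext_supp _ e h, hη e h]
  -- the dual functionals
  let f : Sym2 U → Module.Dual ℝ (↥G.edgeSet → ℝ) := fun c =>
    { toFun := fun v => pdist G (ext v) c
      map_add' := by
        intro a b
        show pdist G (ext (a + b)) c = pdist G (ext a) c + pdist G (ext b) c
        rw [pdist_eq_sum _ _ _ (hppf c), pdist_eq_sum _ _ _ (hppf c),
          pdist_eq_sum _ _ _ (hppf c), ← Finset.sum_add_distrib]
        refine Finset.sum_congr rfl fun e _ => ?_
        simp [map_add]
      map_smul' := by
        intro r a
        show pdist G (ext (r • a)) c = r * pdist G (ext a) c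
        rw [pdist_eq_sum _ _ _ (hppf c), pdist_eq_sum _ _ _ (hppf c)]
        rw [Finset.mul_sum]
        refine Finset.sum_congr rfl fun e _ => ?_
        simp [map_smul] }
  have hf_app : ∀ c v, f c v = pdist G (ext v) c := fun _ _ => rfl
  -- the separation property from the lasso property
  have hsep : ∀ η : Sym2 U → ℝ, (∀ e, e ∉ G.edgeSet → η e = 0) →
      (∀ c ∈ L, pdist G η c = 0) → η = 0 := by
    intro η hsupp hz
    obtain ⟨M, hM⟩ : ∃ M, ∀ e ∈ G.edgeSet, |η e| ≤ M := by
      obtain ⟨M, hM⟩ := (hE.image fun e => |η e|).bddAbove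
      exact ⟨M, fun e he => hM (Set.mem_image_of_mem _ he)⟩
    set M' := max M 0 with hM'def
    have hM'0 : (0:ℝ) ≤ M' := le_max_right _ _
    set ε : ℝ := 1 / (M' + 1) with hεdef
    have hεpos : (0:ℝ) < ε := by positivity
    have hbound : ∀ e ∈ G.edgeSet, ε * |η e| < 1 := by
      intro e he
      have h1 : |η e| ≤ M' := le_trans (hM e he) (le_max_left _ _)
      have h2 : ε * |η e| ≤ ε * M' := by nlinarith
      have h3 : ε * M' < 1 := by
        rw [hεdef]
        rw [div_mul_eq_mul_div, div_lt_one (by linarith)]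
        linarith
      linarith
    set ω₀ : Sym2 U → ℝ := fun e => if e ∈ G.edgeSet then 1 else 0 with hω₀def
    set ω : Sym2 U → ℝ := fun e => ω₀ e + ε * η e with hωdef
    have hω₀prop : IsProperWeighting G ω₀ := by
      refine ⟨⟨fun e => ?_, fun e he => ?_⟩, fun e he _ => ?_⟩
      · by_cases h : e ∈ G.edgeSet <;> simp [hω₀def, h]
      · simp [hω₀def, he]
      · simp [hω₀def, he]
    have hωpos : ∀ e ∈ G.edgeSet, 0 < ω e := by
      intro e he
      have h1 := hbound e he
      have h2 : -|η e| ≤ η e := neg_abs_le (η e)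
      have h3 : ω e = 1 + ε * η e := by simp [hωdef, hω₀def, he]
      rw [h3]
      nlinarith
    have hωprop : IsProperWeighting G ω := by
      refine ⟨⟨fun e => ?_, fun e he => ?_⟩, fun e he _ => (hωpos e he)⟩
      · by_cases h : e ∈ G.edgeSet
        · exact le_of_lt (hωpos e h)
        · simp [hωdef, hω₀def, h, hsupp e h]
      · simp [hωdef, hω₀def, he, hsupp e he]
    have hLiso : LIso L G ω G ω₀ := by
      intro x y hxy
      have hlin : pdist G ω s(x, y) = pdist G ω₀ s(x, y) + ε * pdist G η s(x, y) := by
        rw [pdist_eq_sum _ _ _ (hppf s(x,y)), pdist_eq_sum _ _ _ (hppf s(x,y)),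
          pdist_eq_sum _ _ _ (hppf s(x,y)), Finset.mul_sum, ← Finset.sum_add_distrib]
      have hzc := hz s(x, y) hxy
      have := hlin
      rw [hzc, mul_zero, add_zero] at this
      rw [pdist_eq_tdist, pdist_eq_tdist] at this
      exact this
    have heq := hlasso ω ω₀ hωprop hω₀prop hLiso
    funext e
    by_cases he : e ∈ G.edgeSet
    · have := congrFun heq e
      have h2 : ε * η e = 0 := by
        simpa [hωdef] using this
      have := mul_eq_zero.mp h2
      rcases this with h | h
      · exact absurd h (ne_of_gt hεpos)
      · exact h
    · exact hsupp e he
  -- Part 1: injectivity of the evaluation map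
  have card1 : G.edgeSet.ncard ≤ L.ncard := by
    let Φ : (↥G.edgeSet → ℝ) →ₗ[ℝ] (↥L → ℝ) := LinearMap.pi fun c : ↥L => f c.1
    have hΦinj : Function.Injective Φ := by
      rw [← LinearMap.ker_eq_bot, eq_bot_iff]
      intro v hv
      rw [LinearMap.mem_ker] at hv
      have hzero : ∀ c ∈ L, pdist G (ext v) c = 0 := by
        intro c hc
        have := congrFun hv ⟨c, hc⟩
        exact this
      have := hext_inj v (hsep (ext v) (hext_supp v) hzero)
      simp [this]
    have hfr := LinearMap.finrank_le_finrank_of_injective hΦinj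
    rw [Module.finrank_fintype_fun_eq_card, Module.finrank_fintype_fun_eq_card] at hfr
    rwa [← Nat.card_coe_set_eq, ← Nat.card_coe_set_eq,
      Nat.card_eq_fintype_card, Nat.card_eq_fintype_card]
  refine ⟨card1, ?_⟩
  -- Part 2: a spanning subfamily
  have hcoann : (Submodule.span ℝ (f '' L)).dualCoannihilator = ⊥ := by
    rw [eq_bot_iff]
    intro v hv
    rw [Submodule.mem_dualCoannihilator] at hv
    have hzero : ∀ c ∈ L, pdist G (ext v) c = 0 := fun c hc =>
      hv (f c) (Submodule.subset_span ⟨c, hc, rfl⟩)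
    have := hext_inj v (hsep (ext v) (hext_supp v) hzero)
    simp [this]
  have hspan : Submodule.span ℝ (f '' L) = ⊤ := by
    apply Submodule.eq_top_of_finrank_eq
    have h1 := Subspace.finrank_add_finrank_dualCoannihilator_eq
      (Submodule.span ℝ (f '' L))
    rw [hcoann, finrank_bot, add_zero] at h1
    rw [h1, Subspace.dual_finrank_eq]
  obtain ⟨s, hsub, hspan', hli⟩ := exists_linearIndependent ℝ (f '' L)
  rw [hspan] at hspan'
  let b : Module.Basis ↥s ℝ (Module.Dual ℝ (↥G.edgeSet → ℝ)) :=
    Module.Basis.mk hli (by rw [Subtype.range_coe, hspan'])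
  haveI : Fintype ↥s := FiniteDimensional.fintypeBasisIndex b
  have hscard : Fintype.card ↥s = G.edgeSet.ncard := by
    have h1 := Module.finrank_eq_card_basis b
    rw [Subspace.dual_finrank_eq, Module.finrank_fintype_fun_eq_card] at h1
    rw [← h1, ← Nat.card_coe_set_eq, Nat.card_eq_fintype_card]
  have hch : ∀ φ : ↥s, ∃ c, c ∈ L ∧ f c = φ.1 := by
    intro φ
    obtain ⟨c, hc, hfc⟩ := hsub φ.2
    exact ⟨c, hc, hfc⟩
  choose g hg1 hg2 using hch
  refine ⟨Set.range g, Set.range_subset_iff.mpr hg1, ?_, ?_⟩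
  · -- range g is a lasso
    intro ω ω' hω hω' hiso
    set η : Sym2 U → ℝ := fun e => ω e - ω' e with hηdef
    have hsupp : ∀ e, e ∉ G.edgeSet → η e = 0 := fun e he => by
      simp [hηdef, hω.zero_off e he, hω'.zero_off e he]
    have hz : ∀ c ∈ Set.range g, pdist G η c = 0 := by
      intro c hc
      induction c using Sym2.ind with
      | _ x y =>
        have hiso' := hiso x y hc
        have hlin : pdist G η s(x, y) = pdist G ω s(x, y) - pdist G ω' s(x, y) := by
          rw [pdist_eq_sum _ _ _ (hppf s(x,y)), pdist_eq_sum _ _ _ (hppf s(x,y)),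
            pdist_eq_sum _ _ _ (hppf s(x,y)), ← Finset.sum_sub_distrib]
        rw [hlin, pdist_eq_tdist, pdist_eq_tdist, hiso', sub_self]
    set v : ↥G.edgeSet → ℝ := fun e => η e.1 with hvdef
    have hηv : ext v = η := hres η hsupp
    have hall : ∀ ψ : Module.Dual ℝ (↥G.edgeSet → ℝ), ψ v = 0 := by
      intro ψ
      have hψ : ψ ∈ Submodule.span ℝ s := hspan' ▸ Submodule.mem_top
      induction hψ using Submodule.span_induction with
      | mem φ hφ =>
        have : f (g ⟨φ, hφ⟩) = φ := hg2 ⟨φ, hφ⟩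
        rw [← this, hf_app, hηv]
        exact hz _ ⟨⟨φ, hφ⟩, rfl⟩
      | zero => simp
      | add a b _ _ ha hb => simp [ha, hb]
      | smul r a _ ha => simp [ha]
    have hv0 : v = 0 := (Module.forall_dual_apply_eq_zero_iff ℝ v).mp hall
    have hη0 : η = 0 := by rw [← hηv, hv0, map_zero]
    funext e
    have := congrFun hη0 e
    simp only [hηdef, Pi.zero_apply] at this
    linarith
  · -- cardinality
    calc (Set.range g).ncard = Nat.card (Set.range g) := (Nat.card_coe_set_eq _).symm
      _ ≤ Nat.card ↥s := by
          have hginj : Function.Injective g := by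
            intro φ ψ h
            have := hg2 φ
            rw [h, hg2 ψ] at this
            exact Subtype.ext this.symm
          rw [Nat.card_range_of_injective hginj]
      _ = G.edgeSet.ncard := by rw [Nat.card_eq_fintype_card, hscard]


/-- If `L` is an edge-weight lasso for the `X`-tree `T = (V,E)` then
`|L| ≥ |E|`, and if moreover `L` is a minimal edge-weight lasso for `T`
then `|L| = |E|`. -/
theorem edgeWeightLasso_card_ge_and_minimal_card_eq {U : Type}
    (X : Set U) (G : SimpleGraph U)
    (hXfin : X.Finite) (hX3 : 3 ≤ X.ncard) (hT : IsXTree X G)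
    (L : Set (Sym2 U)) (hL : IsCordSet X L)
    (hlasso : EdgeWeightLasso G L) :
    G.edgeSet.ncard ≤ L.ncard ∧
      ((∀ L' : Set (Sym2 U), L' ⊂ L → ¬ EdgeWeightLasso G L') →
        L.ncard = G.edgeSet.ncard) := by
  have hE : G.edgeSet.Finite := by
    apply (Set.Finite.image2 (fun a b => s(a, b)) hT.support_finite hT.support_finite).subset
    intro e he
    induction e using Sym2.ind with
    | _ a b =>
      rw [SimpleGraph.mem_edgeSet] at he
      exact Set.mem_image2_of_mem ⟨b, he⟩ ⟨a, he.symm⟩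
  have hLfin : L.Finite := by
    apply (Set.Finite.image2 (fun a b => s(a, b)) hXfin hXfin).subset
    intro c hc
    induction c using Sym2.ind with
    | _ a b =>
      obtain ⟨-, hmem⟩ := hL s(a, b) hc
      exact Set.mem_image2_of_mem (hmem a (Sym2.mem_mk_left a b))
        (hmem b (Sym2.mem_mk_right a b))
  obtain ⟨h1, L₀, hsub, hlasso₀, hcard⟩ := key G hE L hLfin hlasso
  refine ⟨h1, fun hmin => ?_⟩
  rcases hsub.lt_or_eq with h | h
  · exact absurd hlasso₀ (hmin L₀ h)
  · exact le_antisymm (h ▸ hcard) h1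

end Lasso
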